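/- For every finite poset P there exists a finite poset Q containing P as an induced subposet such that P and Q have the same height, the cover graph of Q is obtained from the cover graph of P by adding vertices of degree 1, and dim(P) ≤ dim(Min(Q), Max(Q)). -/

import Mathlib

section Defs
variable (α : Type*) [PartialOrder α]

/-- `L` is a linear extension of the partial order on `α`. -/
def IsLinExt (L : LinearOrder α) : Prop := ∀ x y : α, x ≤ y → L.le x y

/-- The poset `α` is the intersection of `d` linear extensions. -/
def HasRealizer (d : ℕ) : Prop :=
  ∃ Ls : Fin d → LinearOrder α, (∀ i, IsLinExt α (Ls i)) ∧
    ∀ x y : α, (∀ i, (Ls i).le x y) → x ≤ y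

/-- The order dimension of the poset `α`. -/
noncomputable def pdim : ℕ := sInf {d | HasRealizer α d}

/-- `x` and `y` are incomparable. -/
def IncompP (x y : α) : Prop := ¬ x ≤ y ∧ ¬ y ≤ x

/-- A set of (incomparable) pairs is reversible if some linear extension reverses all pairs. -/
def ReversibleSet (I : Set (α × α)) : Prop :=
  ∃ L : LinearOrder α, IsLinExt α L ∧ ∀ p ∈ I, L.lt p.2 p.1

/-- `I` can be partitioned into `d` reversible sets. -/
def RevPart (I : Set (α × α)) (d : ℕ) : Prop :=
  ∃ J : Fin d → Set (α × α), (⋃ i, J i) = I ∧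
    (∀ i j, i ≠ j → Disjoint (J i) (J j)) ∧ ∀ i, ReversibleSet α (J i)

/-- The least number of reversible sets partitioning `I` (with `revDim ∅ = 1`). -/
noncomputable def revDim (I : Set (α × α)) : ℕ := sInf {d | 0 < d ∧ RevPart α I d}

/-- Incomparable pairs `(a,b)` with `a ∈ A` and `b ∈ B`. -/
def IncPairs (A B : Set α) : Set (α × α) := {p | p.1 ∈ A ∧ p.2 ∈ B ∧ IncompP α p.1 p.2}

noncomputable def dimAB (A B : Set α) : ℕ := revDim α (IncPairs α A B)

/-- The minimal elements of `α`. -/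
def minimalSet : Set α := {x | ∀ y : α, y ≤ x → y = x}

/-- The maximal elements of `α`. -/
def maximalSet : Set α := {x | ∀ y : α, x ≤ y → y = x}

end Defs

namespace Stmt8Aux

/-- Build a `LinearOrder` from a relation that is a linear order. -/
noncomputable def mkLO {γ : Type*} (r : γ → γ → Prop) (h : IsLinearOrder γ r) :
    LinearOrder γ where
  le := r
  lt a b := r a b ∧ ¬ r b a
  le_refl := h.1.1.1.1
  le_trans := h.1.1.2.1
  lt_iff_le_not_ge _ _ := Iff.rfl
  le_antisymm := h.1.2.1
  le_total := h.2.1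
  toDecidableLE := fun _ _ => Classical.dec _

lemma exists_linExt (γ : Type*) [PartialOrder γ] : ∃ L : LinearOrder γ, IsLinExt γ L := by
  obtain ⟨s, hs, hle⟩ := extend_partialOrder ((· ≤ ·) : γ → γ → Prop)
  exact ⟨mkLO s hs, fun x y h => hle x y h⟩

lemma exists_linExt_rev {γ : Type*} [PartialOrder γ] {a b : γ} (h : IncompP γ a b) :
    ∃ L : LinearOrder γ, IsLinExt γ L ∧ L.lt b a := by
  let r : γ → γ → Prop := fun x y => x ≤ y ∨ (x ≤ b ∧ a ≤ y)
  haveI : IsPartialOrder γ r := by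
    refine { refl := fun x => Or.inl le_rfl, trans := ?_, antisymm := ?_ }
    · rintro x y z (hxy | ⟨h1, h2⟩) (hyz | ⟨h3, h4⟩)
      · exact Or.inl (hxy.trans hyz)
      · exact Or.inr ⟨hxy.trans h3, h4⟩
      · exact Or.inr ⟨h1, h2.trans hyz⟩
      · exact Or.inr ⟨h1, h4⟩
    · rintro x y (hxy | ⟨h1, h2⟩) (hyx | ⟨h3, h4⟩)
      · exact le_antisymm hxy hyx
      · exact absurd (h4.trans (hxy.trans h3)) h.1
      · exact absurd (h2.trans (hyx.trans h1)) h.1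
      · exact absurd (h2.trans h3) h.1
  obtain ⟨s, hs, hrs⟩ := extend_partialOrder r
  have hba : s b a := hrs b a (Or.inr ⟨le_rfl, le_rfl⟩)
  refine ⟨mkLO s hs, fun x y hxy => hrs x y (Or.inl hxy), hba, fun hab => ?_⟩
  have : a = b := hs.1.2.1 _ _ hab hba
  exact h.1 (this ▸ le_rfl)

/-- Every finite set of incomparable pairs admits a partition into reversible sets. -/
lemma revpart_exists (γ : Type*) [PartialOrder γ] [Fintype γ] (I : Set (γ × γ))
    (hI : ∀ p ∈ I, IncompP γ p.1 p.2) : ∃ d, 0 < d ∧ RevPart γ I d := by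
  classical
  let n := Fintype.card (γ × γ)
  let e := Fintype.equivFin (γ × γ)
  refine ⟨n + 1, Nat.succ_pos _,
    fun i => {p | p ∈ I ∧ (e p).castSucc = i}, ?_, ?_, ?_⟩
  · ext p
    simp only [Set.mem_iUnion, Set.mem_setOf_eq]
    exact ⟨fun ⟨i, hi, _⟩ => hi, fun hp => ⟨(e p).castSucc, hp, rfl⟩⟩
  · intro i j hij
    rw [Set.disjoint_left]
    rintro p ⟨_, hpi⟩ ⟨_, hpj⟩
    exact hij (hpi ▸ hpj)
  · intro i
    by_cases hne : ∃ p, p ∈ I ∧ (e p).castSucc = i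
    · obtain ⟨p, hpI, hpe⟩ := hne
      obtain ⟨L, hL, hlt⟩ := exists_linExt_rev (hI p hpI)
      refine ⟨L, hL, ?_⟩
      rintro q ⟨hqI, hqe⟩
      have : e q = e p := Fin.castSucc_injective _ (hqe.trans hpe.symm)
      have : q = p := e.injective this
      rw [this]; exact hlt
    · obtain ⟨L, hL⟩ := exists_linExt γ
      exact ⟨L, hL, fun q hq => absurd ⟨q, hq.1, hq.2⟩ hne⟩

variable (α : Type) [PartialOrder α]

/-- The extension: `α` plus a new minimal element below each non-minimal element
and a new maximal element above each non-maximal element. -/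
def B : Type := α ⊕ ({x : α // ∃ y, y < x} ⊕ {x : α // ∃ y, x < y})

variable {α}

def eB (x : α) : B α := Sum.inl x
def mB (s : {x : α // ∃ y, y < x}) : B α := Sum.inr (Sum.inl s)
def MB (t : {x : α // ∃ y, x < y}) : B α := Sum.inr (Sum.inr t)

def ble : B α → B α → Prop
  | Sum.inl x, Sum.inl y => x ≤ y
  | Sum.inl _, Sum.inr (Sum.inl _) => False
  | Sum.inl x, Sum.inr (Sum.inr t) => x ≤ t.1
  | Sum.inr (Sum.inl s), Sum.inl y => s.1 ≤ y
  | Sum.inr (Sum.inl s), Sum.inr (Sum.inl s') => s = s'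
  | Sum.inr (Sum.inl s), Sum.inr (Sum.inr t) => s.1 ≤ t.1
  | Sum.inr (Sum.inr _), Sum.inl _ => False
  | Sum.inr (Sum.inr _), Sum.inr (Sum.inl _) => False
  | Sum.inr (Sum.inr t), Sum.inr (Sum.inr t') => t = t'

instance instPOB : PartialOrder (B α) where
  le := ble
  le_refl a := by
    rcases a with x | s | t
    · exact le_refl x
    · exact rfl
    · exact rfl
  le_trans a b c hab hbc := by
    rcases a with x | s | t <;> rcases b with y | s' | t' <;> rcases c with z | s'' | t'' <;>
      first
        | exact (hab : False).elim
        | exact (hbc : False).elim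
        | exact le_trans hab hbc
        | (cases (hab : _ = _); exact hbc)
        | (cases (hbc : _ = _); exact hab)
  le_antisymm a b hab hba := by
    rcases a with x | s | t <;> rcases b with y | s' | t' <;>
      first
        | exact (hab : False).elim
        | exact (hba : False).elim
        | exact congrArg Sum.inl (le_antisymm hab hba)
        | (cases (hab : _ = _); rfl)

lemma eB_le_eB {x y : α} : eB x ≤ eB y ↔ x ≤ y := Iff.rfl
lemma eB_le_mB {x : α} {s} : eB x ≤ mB s ↔ False := Iff.rfl
lemma eB_le_MB {x : α} {t} : eB x ≤ MB t ↔ x ≤ t.1 := Iff.rfl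
lemma mB_le_eB {s} {y : α} : mB s ≤ eB y ↔ s.1 ≤ y := Iff.rfl
lemma mB_le_mB {s s' : {x : α // ∃ y, y < x}} : mB s ≤ mB s' ↔ s = s' := Iff.rfl
lemma mB_le_MB {s} {t : {x : α // ∃ y, x < y}} : mB s ≤ MB t ↔ s.1 ≤ t.1 := Iff.rfl
lemma MB_le_eB {t} {y : α} : MB t ≤ eB y ↔ False := Iff.rfl
lemma MB_le_mB {t} {s : {x : α // ∃ y, y < x}} : MB t ≤ mB s ↔ False := Iff.rfl
lemma MB_le_MB {t t' : {x : α // ∃ y, x < y}} : MB t ≤ MB t' ↔ t = t' := Iff.rfl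

lemma eB_inj {x y : α} (h : eB x = eB y) : x = y := Sum.inl.inj h

lemma eB_lt_eB {x y : α} : eB x < eB y ↔ x < y := by
  rw [lt_iff_le_not_ge, lt_iff_le_not_ge]; exact Iff.rfl
lemma eB_lt_mB {x : α} {s} : ¬ eB x < mB s := fun h => h.le
lemma eB_lt_MB {x : α} {t} : eB x < MB t ↔ x ≤ t.1 := by
  rw [lt_iff_le_not_ge]
  exact ⟨fun h => h.1, fun h => ⟨h, fun hc => (MB_le_eB.1 hc)⟩⟩
lemma mB_lt_eB {s} {y : α} : mB s < eB y ↔ s.1 ≤ y := by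
  rw [lt_iff_le_not_ge]
  exact ⟨fun h => h.1, fun h => ⟨h, fun hc => (eB_le_mB.1 hc)⟩⟩
lemma mB_lt_mB {s s' : {x : α // ∃ y, y < x}} : ¬ mB s < mB s' := fun h => by
  rw [lt_iff_le_not_ge] at h
  exact h.2 (mB_le_mB.2 (mB_le_mB.1 h.1).symm)
lemma mB_lt_MB {s} {t : {x : α // ∃ y, x < y}} : mB s < MB t ↔ s.1 ≤ t.1 := by
  rw [lt_iff_le_not_ge]
  exact ⟨fun h => h.1, fun h => ⟨h, fun hc => (MB_le_mB.1 hc)⟩⟩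
lemma MB_not_lt {t} {b : B α} : ¬ MB t < b := fun h => by
  rw [lt_iff_le_not_ge] at h
  rcases b with y | s' | t'
  · exact MB_le_eB.1 h.1
  · exact MB_le_mB.1 h.1
  · exact h.2 (MB_le_MB.2 (MB_le_MB.1 h.1).symm)
lemma not_lt_mB {s} {b : B α} : ¬ b < mB s := fun h => by
  rw [lt_iff_le_not_ge] at h
  rcases b with y | s' | t'
  · exact eB_le_mB.1 h.1
  · exact h.2 (mB_le_mB.2 (mB_le_mB.1 h.1).symm)
  · exact MB_le_mB.1 h.1

lemma mB_lt_eB_self {s : {x : α // ∃ y, y < x}} : mB s < eB s.1 := mB_lt_eB.2 le_rfl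
lemma eB_lt_MB_self {t : {x : α // ∃ y, x < y}} : eB t.1 < MB t := eB_lt_MB.2 le_rfl

/-- Cover relations among old elements are unchanged. -/
lemma covBy_iff {x y : α} : eB x ⋖ eB y ↔ x ⋖ y := by
  constructor
  · rintro ⟨h1, h2⟩
    refine ⟨eB_lt_eB.1 h1, fun z hz1 hz2 => ?_⟩
    exact h2 (eB_lt_eB.2 hz1) (eB_lt_eB.2 hz2)
  · rintro ⟨h1, h2⟩
    refine ⟨eB_lt_eB.2 h1, fun c hc1 hc2 => ?_⟩
    rcases c with z | s | t
    · exact h2 (eB_lt_eB.1 hc1) (eB_lt_eB.1 hc2)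
    · exact eB_lt_mB hc1
    · exact MB_not_lt hc2

/-- Each new minimal element has exactly one cover-graph neighbour. -/
lemma mB_unique_nbr (s : {x : α // ∃ y, y < x}) :
    ∃! z : B α, z ⋖ mB s ∨ mB s ⋖ z := by
  refine ⟨eB s.1, Or.inr ⟨mB_lt_eB_self, fun c hc1 hc2 => ?_⟩, ?_⟩
  · rcases c with z | s' | t
    · exact absurd (mB_lt_eB.1 hc1) (not_le_of_gt (eB_lt_eB.1 hc2))
    · exact mB_lt_mB hc1
    · exact MB_not_lt hc2
  · rintro z (hz | hz)
    · exact absurd hz.1 not_lt_mB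
    · rcases z with w | s' | t
      · have hw : s.1 ≤ w := mB_lt_eB.1 hz.1
        rcases eq_or_lt_of_le hw with h | h
        · exact congrArg _ h.symm
        · exact absurd (eB_lt_eB.2 h) (hz.2 mB_lt_eB_self)
      · exact absurd hz.1 mB_lt_mB
      · have ht : s.1 ≤ t.1 := mB_lt_MB.1 hz.1
        exact absurd (eB_lt_MB.2 ht) (hz.2 mB_lt_eB_self)

/-- Each new maximal element has exactly one cover-graph neighbour. -/
lemma MB_unique_nbr (t : {x : α // ∃ y, x < y}) :
    ∃! z : B α, z ⋖ MB t ∨ MB t ⋖ z := by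
  refine ⟨eB t.1, Or.inl ⟨eB_lt_MB_self, fun c hc1 hc2 => ?_⟩, ?_⟩
  · rcases c with z | s' | t'
    · exact absurd (eB_lt_MB.1 hc2) (not_le_of_gt (eB_lt_eB.1 hc1))
    · exact not_lt_mB hc1
    · exact MB_not_lt hc2
  · rintro z (hz | hz)
    · rcases z with w | s' | t'
      · have hw : w ≤ t.1 := eB_lt_MB.1 hz.1
        rcases eq_or_lt_of_le hw with h | h
        · exact congrArg _ h
        · exact absurd eB_lt_MB_self (hz.2 (eB_lt_eB.2 h))
      · have hs : s'.1 ≤ t.1 := mB_lt_MB.1 hz.1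
        exact absurd eB_lt_MB_self (hz.2 (mB_lt_eB.2 hs))
      · exact absurd hz.1 MB_not_lt
    · exact absurd hz.1 MB_not_lt

/-- Projection back to `α`, strictly order preserving on strict pairs. -/
noncomputable def gB : B α → α
  | Sum.inl x => x
  | Sum.inr (Sum.inl s) => s.2.choose
  | Sum.inr (Sum.inr t) => t.2.choose

lemma gB_strict {u v : B α} (h : u < v) : gB u < gB v := by
  rcases u with x | s | t <;> rcases v with y | s' | t'
  · exact eB_lt_eB.1 h
  · exact absurd h eB_lt_mB
  · exact lt_of_le_of_lt (eB_lt_MB.1 h) t'.2.choose_spec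
  · exact lt_of_lt_of_le s.2.choose_spec (mB_lt_eB.1 h)
  · exact absurd h mB_lt_mB
  · exact lt_of_lt_of_le s.2.choose_spec (le_of_lt (lt_of_le_of_lt (mB_lt_MB.1 h) t'.2.choose_spec))
  · exact absurd h MB_not_lt
  · exact absurd h MB_not_lt
  · exact absurd h MB_not_lt

noncomputable def aB (x : α) : B α :=
  @dite (B α) (∃ y, y < x) (Classical.propDecidable _) (fun h => mB ⟨x, h⟩) (fun _ => eB x)
noncomputable def bB (y : α) : B α :=
  @dite (B α) (∃ z, y < z) (Classical.propDecidable _) (fun h => MB ⟨y, h⟩) (fun _ => eB y)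

lemma aB_mem_min (x : α) : aB x ∈ minimalSet (B α) := by
  unfold aB
  split
  · rintro (y | s' | t') hy
    · exact absurd hy (fun h => (eB_le_mB (x := y)).1 h)
    · exact congrArg (fun u => mB u) (mB_le_mB.1 hy)
    · exact absurd hy (fun h => (MB_le_mB (t := t')).1 h)
  · rename_i h
    rintro (y | s' | t') hy
    · rcases eq_or_lt_of_le (eB_le_eB.1 hy) with he | hl
      · exact congrArg _ he
      · exact absurd ⟨y, hl⟩ h
    · rcases eq_or_lt_of_le (mB_le_eB.1 hy) with he | hl
      · exact absurd ⟨s'.2.choose, he ▸ s'.2.choose_spec⟩ h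
      · exact absurd ⟨s'.1, hl⟩ h
    · exact absurd hy (fun hc => (MB_le_eB (t := t')).1 hc)

lemma bB_mem_max (y : α) : bB y ∈ maximalSet (B α) := by
  unfold bB
  split
  · rintro (z | s' | t') hy
    · exact absurd hy (fun h => (MB_le_eB (y := z)).1 h)
    · exact absurd hy (fun h => (MB_le_mB (s := s')).1 h)
    · exact congrArg (fun u => MB u) (MB_le_MB.1 hy).symm
  · rename_i h
    rintro (z | s' | t') hy
    · rcases eq_or_lt_of_le (eB_le_eB.1 hy) with he | hl
      · exact congrArg _ he.symm
      · exact absurd ⟨z, hl⟩ h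
    · exact absurd hy (fun hc => (eB_le_mB (s := s')).1 hc)
    · rcases eq_or_lt_of_le (eB_le_MB.1 hy) with he | hl
      · exact absurd ⟨t'.2.choose, he ▸ t'.2.choose_spec⟩ h
      · exact absurd ⟨t'.1, hl⟩ h

lemma aB_le (x : α) : aB x ≤ eB x := by
  unfold aB; split
  · exact mB_le_eB.2 le_rfl
  · exact le_rfl

lemma le_bB (y : α) : eB y ≤ bB y := by
  unfold bB; split
  · exact eB_le_MB.2 le_rfl
  · exact le_rfl

lemma aB_bB_incomp {x y : α} (h : IncompP α x y) : IncompP (B α) (aB x) (bB y) := by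
  constructor
  · intro hc
    unfold aB bB at hc
    split at hc <;> split at hc <;>
      first
      | exact h.1 (mB_le_MB.1 hc)
      | exact h.1 (mB_le_eB.1 hc)
      | exact h.1 (eB_le_MB.1 hc)
      | exact h.1 (eB_le_eB.1 hc)
  · intro hc
    unfold aB bB at hc
    split at hc <;> split at hc <;>
      first
      | exact MB_le_mB.1 hc
      | exact MB_le_eB.1 hc
      | exact eB_le_mB.1 hc
      | exact h.2 (eB_le_eB.1 hc)

/-- A reversible partition of `Inc(Min(B α), Max(B α))` yields a realizer of `α`. -/
lemma hasRealizer_of_revpart {d : ℕ} (hd : 0 < d)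
    (hR : RevPart (B α) (IncPairs (B α) (minimalSet (B α)) (maximalSet (B α))) d) :
    HasRealizer α d := by
  obtain ⟨J, hU, _, hRev⟩ := hR
  choose Ls hExt hRevp using hRev
  have hlin : ∀ i, IsLinearOrder α (fun x y => (Ls i).le (eB x) (eB y)) := fun i =>
    { refl := fun x => (Ls i).le_refl _
      trans := fun x y z h1 h2 => (Ls i).le_trans _ _ _ h1 h2
      antisymm := fun x y h1 h2 => eB_inj ((Ls i).le_antisymm _ _ h1 h2)
      total := fun x y => (Ls i).le_total _ _ }
  refine ⟨fun i => mkLO _ (hlin i), fun i x y hxy => hExt i _ _ (eB_le_eB.2 hxy), ?_⟩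
  intro x y hall
  by_contra hxy
  by_cases hyx : y ≤ x
  · have h0 : (Ls ⟨0, hd⟩).le (eB x) (eB y) := hall ⟨0, hd⟩
    have h1 : (Ls ⟨0, hd⟩).le (eB y) (eB x) := hExt ⟨0, hd⟩ _ _ (eB_le_eB.2 hyx)
    exact hxy (le_of_eq (eB_inj ((Ls ⟨0, hd⟩).le_antisymm _ _ h0 h1)))
  · have hinc : IncompP α x y := ⟨hxy, hyx⟩
    have hpair : (aB x, bB y) ∈
        IncPairs (B α) (minimalSet (B α)) (maximalSet (B α)) :=
      ⟨aB_mem_min x, bB_mem_max y, aB_bB_incomp hinc⟩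
    rw [← hU] at hpair
    obtain ⟨i, hmem⟩ := Set.mem_iUnion.1 hpair
    have hlt := hRevp i _ hmem
    have h1 : (Ls i).le (aB x) (eB x) := hExt i _ _ (aB_le x)
    have h2 : (Ls i).le (eB y) (bB y) := hExt i _ _ (le_bB y)
    have h3 : (Ls i).le (aB x) (bB y) :=
      (Ls i).le_trans _ _ _ ((Ls i).le_trans _ _ _ h1 (hall i)) h2
    exact (((Ls i).lt_iff_le_not_ge _ _).1 hlt).2 h3

end Stmt8Aux

/-- `β`, with `f : α → β`, is a suitable min-max extension of the poset `α`:
`f` embeds `α` as an induced subposet, cover relations among image points are those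
of `α`, each new element has exactly one neighbour in the cover graph of `β`
(a degree-1 vertex), heights agree (same strictly increasing chains lengths), and
`dim α ≤ dim(Min β, Max β)`. -/
def GoodMinMaxExtension (α β : Type) [PartialOrder α] [PartialOrder β] : Prop :=
  ∃ f : α → β,
    (∀ x y : α, f x ≤ f y ↔ x ≤ y) ∧
    (∀ x y : α, f x ⋖ f y ↔ x ⋖ y) ∧
    (∀ b : β, b ∉ Set.range f → ∃! z : β, z ⋖ b ∨ b ⋖ z) ∧
    (∀ n : ℕ, (∃ c : Fin n → α, StrictMono c) ↔ (∃ c : Fin n → β, StrictMono c)) ∧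
    pdim α ≤ dimAB β (minimalSet β) (maximalSet β)

/-- every finite poset `P` has an extension `Q` containing it as an induced
subposet, of the same height, whose cover graph adds only degree-1 vertices, and with
`dim P ≤ dim(Min Q, Max Q)`. -/
theorem stmt8 (α : Type) [Fintype α] [PartialOrder α] :
    ∃ (β : Type) (_ : Fintype β) (iP : PartialOrder β),
      @GoodMinMaxExtension α β _ iP := by
  classical
  have hfin : Finite (Stmt8Aux.B α) := by unfold Stmt8Aux.B; infer_instance
  haveI : Fintype (Stmt8Aux.B α) := Fintype.ofFinite _
  refine ⟨Stmt8Aux.B α, inferInstance, inferInstance, Stmt8Aux.eB, ?_, ?_, ?_, ?_, ?_⟩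
  · exact fun x y => Iff.rfl
  · exact fun x y => Stmt8Aux.covBy_iff
  · rintro (x | s | t) hb
    · exact absurd ⟨x, rfl⟩ hb
    · exact Stmt8Aux.mB_unique_nbr s
    · exact Stmt8Aux.MB_unique_nbr t
  · intro n
    constructor
    · rintro ⟨c, hc⟩
      exact ⟨fun i => Stmt8Aux.eB (c i), fun i j hij => Stmt8Aux.eB_lt_eB.2 (hc hij)⟩
    · rintro ⟨c, hc⟩
      exact ⟨fun i => Stmt8Aux.gB (c i), fun i j hij => Stmt8Aux.gB_strict (hc hij)⟩
  · obtain ⟨d0, hd0, hR0⟩ := Stmt8Aux.revpart_exists (Stmt8Aux.B α)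
      (IncPairs (Stmt8Aux.B α) (minimalSet _) (maximalSet _)) (fun p hp => hp.2.2)
    have hne : {d | 0 < d ∧ RevPart (Stmt8Aux.B α)
        (IncPairs (Stmt8Aux.B α) (minimalSet _) (maximalSet _)) d}.Nonempty :=
      ⟨d0, hd0, hR0⟩
    have hmem := Nat.sInf_mem hne
    have hreal : HasRealizer α (dimAB (Stmt8Aux.B α) (minimalSet _) (maximalSet _)) :=
      Stmt8Aux.hasRealizer_of_revpart hmem.1 hmem.2
    exact Nat.sInf_le hreal
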